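/- For every real s ≥ 0 there exists a constant C > 0, depending only on s, such that for all ε ∈ (0,1) and all λ > 0 one has λ^{s/2} · (−1/ln ε) ∫_ε^{1/ε} e^{−tλ}/t dt ≤ C ε^{−s/2}. -/
import Mathlib


open MeasureTheory

/-- Key pointwise bound: `x^(s/2) * exp(-x) ≤ ⌈s/2⌉!` for `x ≥ 0`. -/
lemma rpow_mul_exp_neg_le (s : ℝ) (hs : 0 ≤ s) {x : ℝ} (hx : 0 ≤ x) :
    x ^ (s / 2) * Real.exp (-x) ≤ (Nat.ceil (s / 2)).factorial := by
  set n := Nat.ceil (s / 2) with hn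
  have hfac : (1 : ℝ) ≤ (n.factorial : ℝ) := by exact_mod_cast Nat.one_le_iff_ne_zero.mpr n.factorial_ne_zero
  have h1 : x ^ (s / 2) ≤ (n.factorial : ℝ) * Real.exp x := by
    rcases le_total x 1 with h | h
    · calc x ^ (s / 2) ≤ 1 := Real.rpow_le_one hx h (by positivity)
        _ ≤ (n.factorial : ℝ) * Real.exp x := by
            have := Real.one_le_exp hx
            nlinarith
    · have h2 : x ^ (s / 2) ≤ x ^ (n : ℝ) :=
        Real.rpow_le_rpow_of_exponent_le h (Nat.le_ceil _)
      have h3 : x ^ n / n.factorial ≤ Real.exp x :=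
        Real.pow_div_factorial_le_exp x hx n
      have hf0 : (0 : ℝ) < n.factorial := by positivity
      calc x ^ (s / 2) ≤ x ^ (n : ℝ) := h2
        _ = x ^ n := by rw [Real.rpow_natCast]
        _ ≤ (n.factorial : ℝ) * Real.exp x := by
            rw [div_le_iff₀ hf0] at h3; linarith [h3]
  have hexp : 0 < Real.exp (-x) := Real.exp_pos _
  calc x ^ (s / 2) * Real.exp (-x)
      ≤ ((n.factorial : ℝ) * Real.exp x) * Real.exp (-x) := by
        exact mul_le_mul_of_nonneg_right h1 hexp.le
    _ = (n.factorial : ℝ) := by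
        rw [mul_assoc, ← Real.exp_add]; simp

/-- For every real `s ≥ 0` there exists `C > 0`, depending only on `s`, such that for all
`ε ∈ (0,1)` and all `λ > 0`,
`λ^(s/2) * (-1/ln ε) * ∫_ε^{1/ε} exp (-tλ)/t dt ≤ C * ε^(-s/2)`. -/
theorem stmt_6 (s : ℝ) (hs : 0 ≤ s) :
    ∃ C : ℝ, 0 < C ∧ ∀ ε ∈ Set.Ioo (0 : ℝ) 1, ∀ lam : ℝ, 0 < lam →
      lam ^ (s / 2) *
          ((-(1 / Real.log ε)) * ∫ t in ε..(1 / ε), Real.exp (-(t * lam)) / t)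
        ≤ C * ε ^ (-(s / 2)) := by
  refine ⟨2 * (Nat.ceil (s / 2)).factorial, by positivity, ?_⟩
  rintro ε ⟨hε0, hε1⟩ lam hlam
  have hεinv : 1 < 1 / ε := one_lt_one_div hε0 hε1
  have hεle : ε ≤ 1 / ε := le_of_lt (hε1.trans hεinv)
  have hlogε : Real.log ε < 0 := Real.log_neg hε0 hε1
  -- bound the integral
  have hint1 : IntervalIntegrable (fun t => Real.exp (-(t * lam)) / t) volume ε (1 / ε) := by
    apply ContinuousOn.intervalIntegrable
    apply ContinuousOn.div (by fun_prop) continuousOn_id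
    intro t ht
    rw [Set.uIcc_of_le hεle] at ht
    exact ne_of_gt (lt_of_lt_of_le hε0 ht.1)
  have hint2 : IntervalIntegrable (fun t => Real.exp (-(ε * lam)) / t) volume ε (1 / ε) := by
    apply ContinuousOn.intervalIntegrable
    apply ContinuousOn.div continuousOn_const continuousOn_id
    intro t ht
    rw [Set.uIcc_of_le hεle] at ht
    exact ne_of_gt (lt_of_lt_of_le hε0 ht.1)
  have hIle : (∫ t in ε..(1 / ε), Real.exp (-(t * lam)) / t)
      ≤ ∫ t in ε..(1 / ε), Real.exp (-(ε * lam)) / t := by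
    apply intervalIntegral.integral_mono_on hεle hint1 hint2
    intro t ht
    have ht0 : 0 < t := lt_of_lt_of_le hε0 ht.1
    apply div_le_div_of_nonneg_right _ ht0.le
    exact Real.exp_le_exp.mpr (by nlinarith [ht.1])
  have h0 : (0 : ℝ) ∉ Set.uIcc ε (1 / ε) := by
    rw [Set.uIcc_of_le hεle]
    rintro ⟨h1, _⟩; linarith
  have hIval : (∫ t in ε..(1 / ε), Real.exp (-(ε * lam)) / t)
      = Real.exp (-(ε * lam)) * (-(2 * Real.log ε)) := by
    have heq : (∫ t in ε..(1 / ε), Real.exp (-(ε * lam)) / t)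
        = Real.exp (-(ε * lam)) * ∫ t in ε..(1 / ε), t⁻¹ := by
      rw [← intervalIntegral.integral_const_mul]
      simp_rw [div_eq_mul_inv]
    rw [heq, integral_inv h0]
    congr 1
    rw [one_div, div_eq_mul_inv, Real.log_mul (by positivity) (by positivity), Real.log_inv]
    ring
  have hlogpos : 0 < -(1 / Real.log ε) := by
    rw [neg_pos]
    exact div_neg_of_pos_of_neg one_pos hlogε
  have hlampow : 0 ≤ lam ^ (s / 2) := Real.rpow_nonneg hlam.le _
  have hexp : 0 < Real.exp (-(ε * lam)) := Real.exp_pos _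
  have key := rpow_mul_exp_neg_le s hs (x := ε * lam) (by positivity)
  have hfact : lam ^ (s / 2) = (ε * lam) ^ (s / 2) * ε ^ (-(s / 2)) := by
    rw [Real.mul_rpow hε0.le hlam.le, Real.rpow_neg hε0.le]
    have : ε ^ (s / 2) ≠ 0 := ne_of_gt (Real.rpow_pos_of_pos hε0 _)
    field_simp
  have hεpow : 0 ≤ ε ^ (-(s / 2)) := Real.rpow_nonneg hε0.le _
  calc lam ^ (s / 2) * ((-(1 / Real.log ε)) * ∫ t in ε..(1 / ε), Real.exp (-(t * lam)) / t)
      ≤ lam ^ (s / 2) * ((-(1 / Real.log ε)) * (Real.exp (-(ε * lam)) * (-(2 * Real.log ε)))) := by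
        rw [← hIval]
        exact mul_le_mul_of_nonneg_left (mul_le_mul_of_nonneg_left hIle hlogpos.le) hlampow
    _ = 2 * (lam ^ (s / 2) * Real.exp (-(ε * lam))) := by
        have : Real.log ε ≠ 0 := ne_of_lt hlogε
        field_simp
        try ring
    _ = 2 * ((ε * lam) ^ (s / 2) * Real.exp (-(ε * lam))) * ε ^ (-(s / 2)) := by
        rw [hfact]; ring
    _ ≤ 2 * (Nat.ceil (s / 2)).factorial * ε ^ (-(s / 2)) := by
        apply mul_le_mul_of_nonneg_right _ hεpow
        have : (0:ℝ) ≤ 2 := by norm_num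
        nlinarith [key]
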